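/- arXiv:2404.04549 — 6 statements merged into one kernel-verified Lean document; each statement's English description precedes it below -/
import Mathlib

section
/- Let d_0 ∈ ℕ and ε > 0. Let a ∈ ℝ^{d_0} and b, c, d ∈ ℝ. Then there exists an affine SNN Ψ_{a,b,c,d,ε} with realization R(Ψ_{a,b,c,d,ε}): ℝ^{d_0} → ℝ such that for all x ∈ ℝ^{d_0}: |R(Ψ_{a,b,c,d,ε})(x) − c·max{a^⊤x + b, 0} − d| ≤ |c|·ε. Moreover, Size(Ψ_{a,b,c,d,ε}) ≤ d_0 + 5, all weights in Ψ_{a,b,c,d,ε} are bounded above in absolute value by max{1/ε, ‖a‖_{ℓ∞}, |b|, |c|, |d|}, and all synaptic weights are bounded below by 1/ε. -/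
open scoped BigOperators

noncomputable section

/-- The ReLU function. -/
def relu (t : ℝ) : ℝ := max t 0

/-- A network graph: a finite directed acyclic graph without isolated nodes. -/
structure NetworkGraph (V : Type) [Fintype V] [DecidableEq V] where
  E : Finset (V × V)
  acyclic : WellFounded (fun u v : V => (u, v) ∈ E)
  noIsolated : ∀ v : V, (∃ u, (u, v) ∈ E) ∨ (∃ u, (v, u) ∈ E)

variable {V : Type} [Fintype V] [DecidableEq V]

/-- Input nodes: nodes with no incoming edges. -/
def NetworkGraph.Vin (G : NetworkGraph V) : Set V := {v | ∀ u, (u, v) ∉ G.E}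

/-- Output nodes: nodes with no outgoing edges. -/
def NetworkGraph.Vout (G : NetworkGraph V) : Set V := {v | ∀ u, (v, u) ∉ G.E}

/-- There exists a directed path with `n` edges in `G`. -/
def NetworkGraph.HasPathLen (G : NetworkGraph V) (n : ℕ) : Prop :=
  ∃ p : Fin (n + 1) → V, ∀ i : Fin n, (p i.castSucc, p i.succ) ∈ G.E

/-- The graph depth (length of the longest directed path) of `G` equals `L`. -/
def NetworkGraph.DepthEq (G : NetworkGraph V) (L : ℕ) : Prop :=
  G.HasPathLen L ∧ ∀ n : ℕ, G.HasPathLen n → n ≤ L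

/-- The potential of node `v` at time `s`, given presynaptic spike times `t`,
weights `w` and delays `d`. -/
def potential (G : NetworkGraph V) (w d : V × V → ℝ) (t : V → ℝ) (v : V) (s : ℝ) : ℝ :=
  ∑ u ∈ Finset.univ.filter (fun u => (u, v) ∈ G.E), w (u, v) * relu (s - t u - d (u, v))

/-- `t` is a consistent assignment of spike times extending the input spike times `tin`:
on input nodes it agrees with `tin`, and at every non-input node `v` the spike time `t v`
is the minimum (which exists) of the set of times at which the potential reaches `1`. -/
def IsSpikeMap (G : NetworkGraph V) (w d : V × V → ℝ) (tin : V → ℝ) (t : V → ℝ) : Prop :=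
  (∀ v ∈ G.Vin, t v = tin v) ∧
  ∀ v : V, v ∉ G.Vin → IsLeast {s : ℝ | potential G w d t v s = 1} (t v)

open Classical in
/-- The spike-time assignment determined by the input spike times `tin` (via choice). -/
def spikeMap (G : NetworkGraph V) (w d : V × V → ℝ) (tin : V → ℝ) : V → ℝ :=
  if h : ∃ t, IsSpikeMap G w d tin t then h.choose else fun _ => 0

/-- Realization of a (positive) SNN, given enumerations of input and output nodes. -/
def snnReal (G : NetworkGraph V) (w d : V × V → ℝ) {din dout : ℕ}
    (ein : Fin din → V) (eout : Fin dout → V) (x : Fin din → ℝ) : Fin dout → ℝ :=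
  fun j => spikeMap G w d (Function.extend ein x (fun _ => 0)) (eout j)

/-- Frobenius norm of a real matrix. -/
def frobNorm {m n : ℕ} (A : Matrix (Fin m) (Fin n) ℝ) : ℝ :=
  Real.sqrt (∑ i, ∑ j, (A i j) ^ 2)

/-- Realization of an affine SNN: affine encoder, positive SNN, affine decoder. -/
def affineReal (G : NetworkGraph V) (w d : V × V → ℝ) {din dout d0 d1 : ℕ}
    (ein : Fin din → V) (eout : Fin dout → V)
    (Win : Matrix (Fin din) (Fin d0) ℝ) (bin : Fin din → ℝ)
    (Wout : Matrix (Fin d1) (Fin dout) ℝ) (bout : Fin d1 → ℝ)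
    (x : Fin d0 → ℝ) : Fin d1 → ℝ :=
  Wout.mulVec (snnReal G w d ein eout (Win.mulVec x + bin)) + bout

/-- ℓ∞ distance of the parameters (weights and delays) of two SNNs on the same graph. -/
def paramDist (G : NetworkGraph V) (w d w' d' : V × V → ℝ) : ℝ :=
  sSup ((fun e => max |w e - w' e| |d e - d' e|) '' (G.E : Set (V × V)))

/-- An affine spiking neural network with input dimension `d0` and output dimension `d1`:
a positive SNN together with enumerations of its input/output nodes and an affine
encoder/decoder pair. -/
structure AffSNN (d0 d1 : ℕ) where
  n : ℕ
  din : ℕ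
  dout : ℕ
  G : NetworkGraph (Fin n)
  w : Fin n × Fin n → ℝ
  dl : Fin n × Fin n → ℝ
  ein : Fin din → Fin n
  eout : Fin dout → Fin n
  Win : Matrix (Fin din) (Fin d0) ℝ
  bin : Fin din → ℝ
  Wout : Matrix (Fin d1) (Fin dout) ℝ
  bout : Fin d1 → ℝ
  w_pos : ∀ e ∈ G.E, 0 < w e
  dl_nonneg : ∀ e ∈ G.E, 0 ≤ dl e
  ein_inj : Function.Injective ein
  ein_range : Set.range ein = G.Vin
  eout_inj : Function.Injective eout
  eout_range : Set.range eout = G.Vout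

/-- Realization of an affine SNN. -/
def AffSNN.real {d0 d1 : ℕ} (Ψ : AffSNN d0 d1) : (Fin d0 → ℝ) → Fin d1 → ℝ :=
  affineReal Ψ.G Ψ.w Ψ.dl Ψ.ein Ψ.eout Ψ.Win Ψ.bin Ψ.Wout Ψ.bout

/-- Size of an affine SNN: the number of nonzero scalar entries of
`(W, D, W_in, W_out, b_in, b_out)`. -/
def AffSNN.size {d0 d1 : ℕ} (Ψ : AffSNN d0 d1) : ℕ :=
  {e | e ∈ Ψ.G.E ∧ Ψ.w e ≠ 0}.ncard + {e | e ∈ Ψ.G.E ∧ Ψ.dl e ≠ 0}.ncard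
    + {p : Fin Ψ.din × Fin d0 | Ψ.Win p.1 p.2 ≠ 0}.ncard
    + {p : Fin d1 × Fin Ψ.dout | Ψ.Wout p.1 p.2 ≠ 0}.ncard
    + {i : Fin Ψ.din | Ψ.bin i ≠ 0}.ncard + {i : Fin d1 | Ψ.bout i ≠ 0}.ncard

/-- All scalar weights of the affine SNN are bounded above in absolute value by `C`. -/
def AffSNN.weightsBddAbove {d0 d1 : ℕ} (Ψ : AffSNN d0 d1) (C : ℝ) : Prop :=
  (∀ e ∈ Ψ.G.E, |Ψ.w e| ≤ C) ∧ (∀ e ∈ Ψ.G.E, |Ψ.dl e| ≤ C) ∧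
  (∀ i j, |Ψ.Win i j| ≤ C) ∧ (∀ i, |Ψ.bin i| ≤ C) ∧
  (∀ i j, |Ψ.Wout i j| ≤ C) ∧ (∀ i, |Ψ.bout i| ≤ C)

/-- All synaptic weights of the affine SNN are bounded below by `c`. -/
def AffSNN.synBddBelow {d0 d1 : ℕ} (Ψ : AffSNN d0 d1) (c : ℝ) : Prop :=
  ∀ e ∈ Ψ.G.E, c ≤ Ψ.w e

/-- Clipping to the interval `[0,1]`. -/
def clip01 (y : ℝ) : ℝ := max 0 (min 1 y)

/-- The hypothesis class of `[0,1]`-clipped realizations of affine SNNs on a fixed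
network graph with parameters bounded as in `P*_SNN(G, d⃗; b, B)` (with `d1 = 1`). -/
def clippedClass (G : NetworkGraph V) {din dout : ℕ} (ein : Fin din → V) (eout : Fin dout → V)
    (b B : ℝ) (d0 : ℕ) : Set ((Fin d0 → ℝ) → ℝ) :=
  { f | ∃ (Win : Matrix (Fin din) (Fin d0) ℝ) (bin : Fin din → ℝ)
        (w dl : V × V → ℝ) (Wout : Matrix (Fin 1) (Fin dout) ℝ) (bout : Fin 1 → ℝ),
      (∀ i j, Win i j ∈ Set.Icc (-B) B) ∧ (∀ i, bin i ∈ Set.Icc (-B) B) ∧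
      (∀ e ∈ G.E, w e ∈ Set.Icc b B) ∧ (∀ e ∈ G.E, dl e ∈ Set.Icc 0 B) ∧
      (∀ i j, Wout i j ∈ Set.Icc (-B) B) ∧ (∀ i, bout i ∈ Set.Icc (-B) B) ∧
      f = fun x => clip01 (affineReal G w dl ein eout Win bin Wout bout x 0) }

/-- The Lipschitz constant `L*` from the covering-number estimate. -/
def Lstar (d0 din dout L : ℕ) (b B : ℝ) : ℝ :=
  (dout : ℝ) * (2 * Real.sqrt din * d0 * B + B * L * (1 + 1 / b ^ 2)
    + 2 * B + L * (1 / b + B)) + 1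

/-- A regular triangulation of a compact set `Ω ⊆ ℝ^{d0}`, with simplices recorded by
their vertex sets. -/
structure RegTriangulation (d0 : ℕ) (Ω : Set (Fin d0 → ℝ)) where
  nodes : Finset (Fin d0 → ℝ)
  faces : Finset (Finset (Fin d0 → ℝ))
  nodes_sub : (nodes : Set (Fin d0 → ℝ)) ⊆ Ω
  card_face : ∀ S ∈ faces, S.card = d0 + 1
  indep : ∀ S ∈ faces, AffineIndependent ℝ ((↑) : {x // x ∈ S} → (Fin d0 → ℝ))
  face_nodes : ∀ S ∈ faces,
    (nodes : Set (Fin d0 → ℝ)) ∩ convexHull ℝ (S : Set (Fin d0 → ℝ)) = (S : Set (Fin d0 → ℝ))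
  cover : Ω = ⋃ S ∈ faces, convexHull ℝ (S : Set (Fin d0 → ℝ))
  inter : ∀ S ∈ faces, ∀ S' ∈ faces,
    convexHull ℝ (S : Set (Fin d0 → ℝ)) ∩ convexHull ℝ (S' : Set (Fin d0 → ℝ))
      = convexHull ℝ ((S ∩ S' : Finset (Fin d0 → ℝ)) : Set (Fin d0 → ℝ))

/-- Euclidean distance on `ℝ^{d0}` (realized as `Fin d0 → ℝ`). -/
def eudist {d0 : ℕ} (x y : Fin d0 → ℝ) : ℝ := Real.sqrt (∑ i, (x i - y i) ^ 2)

/-- Minimal mesh size: the minimal distance between two distinct nodes of a simplex. -/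
def hmin {d0 : ℕ} {Ω : Set (Fin d0 → ℝ)} (T : RegTriangulation d0 Ω) : ℝ :=
  sInf { r | ∃ S ∈ T.faces, ∃ x ∈ S, ∃ y ∈ S, x ≠ y ∧ r = eudist x y }

/-- Maximal mesh size: the maximal distance between two nodes of a simplex. -/
def hmax {d0 : ℕ} {Ω : Set (Fin d0 → ℝ)} (T : RegTriangulation d0 Ω) : ℝ :=
  sSup { r | ∃ S ∈ T.faces, ∃ x ∈ S, ∃ y ∈ S, r = eudist x y }

/-- `f` belongs to the linear finite element space `V_T`: it is continuous on `Ω` and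
affine on each simplex of `T`. -/
def PiecewiseAffineOn {d0 : ℕ} {Ω : Set (Fin d0 → ℝ)} (T : RegTriangulation d0 Ω)
    (f : (Fin d0 → ℝ) → ℝ) : Prop :=
  ContinuousOn f Ω ∧ ∀ S ∈ T.faces, ∃ (a : Fin d0 → ℝ) (c : ℝ),
    ∀ x ∈ convexHull ℝ (S : Set (Fin d0 → ℝ)), f x = ∑ i, a i * x i + c

/-- Admissibility of a compact domain: existence of quasi-uniform triangulations. -/
def Admissible (d0 : ℕ) (Ω : Set (Fin d0 → ℝ)) : Prop :=
  ∃ C1 C2 c2 : ℝ, 0 < C1 ∧ 0 < C2 ∧ 0 < c2 ∧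
    ∀ N : ℕ, 0 < N → ∃ T : RegTriangulation d0 Ω,
      (T.faces.card : ℝ) ≤ C1 * N ∧
      c2 * (N : ℝ) ^ (-(1 : ℝ) / d0) ≤ hmin T ∧
      hmin T ≤ hmax T ∧
      hmax T ≤ C2 * (N : ℝ) ^ (-(1 : ℝ) / d0)

/-- The `W^{s,∞}(Ω)` norm (for `C^s` functions): supremum over `Ω` of the norms of the
iterated derivatives of order at most `s`. -/
def sobNorm {d0 : ℕ} (s : ℕ) (Ω : Set (Fin d0 → ℝ)) (f : (Fin d0 → ℝ) → ℝ) : ℝ :=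
  sSup { r | ∃ k ≤ s, ∃ x ∈ Ω, r = ‖iteratedFDeriv ℝ k f x‖ }

/-- The `L^∞(Ω)` norm. -/
def supNormOn {d0 : ℕ} (Ω : Set (Fin d0 → ℝ)) (f : (Fin d0 → ℝ) → ℝ) : ℝ :=
  sSup ((fun x => |f x|) '' Ω)

/-- The Barron class `Γ_K`. -/
def BarronClass (d0 : ℕ) (K : ℝ) (f : (Fin d0 → ℝ) → ℝ) : Prop :=
  MeasureTheory.LocallyIntegrable f MeasureTheory.volume ∧
  ∃ g : (Fin d0 → ℝ) → ℂ, Measurable g ∧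
    (∀ x, (f x : ℂ) = ∫ ξ, Complex.exp (Complex.I * ((∑ i, x i * ξ i : ℝ) : ℂ)) * g ξ) ∧
    (∫ ξ, eudist ξ 0 * ‖g ξ‖) ≤ K

end
namespace St8

lemma relu_of_nonpos {t : ℝ} (h : t ≤ 0) : relu t = 0 := max_eq_right h
lemma relu_of_nonneg {t : ℝ} (h : 0 ≤ t) : relu t = t := max_eq_left h

lemma key_le (ε t1 t2 : ℝ) (hε : 0 < ε) (h12 : t1 ≤ t2) :
    IsLeast {s : ℝ | (1/ε) * relu (s - t1) + (1/ε) * relu (s - t2) = 1}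
      (min (t1 + ε) ((t1 + t2)/2 + ε/2)) := by
  set T := min (t1 + ε) ((t1 + t2)/2 + ε/2) with hT
  have hmem : (1/ε) * relu (T - t1) + (1/ε) * relu (T - t2) = 1 := by
    rcases le_total (t1 + ε) t2 with hc | hc
    · have hTe : T = t1 + ε := min_eq_left (by linarith)
      rw [hTe, relu_of_nonneg (by linarith), relu_of_nonpos (by linarith)]
      field_simp
      ring
    · have hTe : T = (t1 + t2)/2 + ε/2 := min_eq_right (by linarith)
      rw [hTe, relu_of_nonneg (by linarith), relu_of_nonneg (by linarith)]
      field_simp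
      ring
  refine ⟨hmem, fun s hs => ?_⟩
  simp only [Set.mem_setOf_eq] at hs
  by_contra hlt
  push_neg at hlt
  have hT1 : t1 < T := lt_min (by linarith) (by linarith)
  rcases le_total s t1 with hs1 | hs1
  · rw [relu_of_nonpos (by linarith : s - t1 ≤ 0), relu_of_nonpos (by linarith : s - t2 ≤ 0)] at hs
    simp at hs
  · have hs' : relu (s - t1) + relu (s - t2) = ε := by
      field_simp at hs; linarith
    have hmem' : relu (T - t1) + relu (T - t2) = ε := by
      field_simp at hmem; linarith
    rw [relu_of_nonneg (by linarith)] at hs' hmem'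
    have : relu (s - t2) ≤ relu (T - t2) := max_le_max (by linarith) le_rfl
    linarith

lemma key (ε t1 t2 : ℝ) (hε : 0 < ε) :
    IsLeast {s : ℝ | (1/ε) * relu (s - t1) + (1/ε) * relu (s - t2) = 1}
      (min (min t1 t2 + ε) ((t1 + t2)/2 + ε/2)) := by
  rcases le_total t1 t2 with h | h
  · rw [min_eq_left h]; exact key_le ε t1 t2 hε h
  · have := key_le ε t2 t1 hε h
    rw [min_eq_right h]
    convert this using 2
    · ext s; constructor <;> intro hs <;> linarith
    · ring


def E3 : Finset (Fin 3 × Fin 3) := {(0,2), (1,2)}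

def G3 : NetworkGraph (Fin 3) where
  E := E3
  acyclic := Subrelation.wf
    (fun {u v} h => (show ∀ u v : Fin 3, (u,v) ∈ E3 → u < v by decide) u v h)
    wellFounded_lt
  noIsolated := by decide

lemma potential_eq (ε : ℝ) (t : Fin 3 → ℝ) (s : ℝ) :
    potential G3 (fun _ => 1/ε) (fun _ => 0) t 2 s
      = (1/ε) * relu (s - t 0) + (1/ε) * relu (s - t 1) := by
  unfold potential
  have h : Finset.univ.filter (fun u : Fin 3 => (u, (2:Fin 3)) ∈ G3.E) = {0, 1} := by decide
  rw [h, Finset.sum_pair (by decide : (0:Fin 3) ≠ 1)]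
  simp [sub_zero]

lemma vin_iff (v : Fin 3) : v ∈ G3.Vin ↔ (v = 0 ∨ v = 1) := by
  simp only [NetworkGraph.Vin, Set.mem_setOf_eq]
  revert v; decide

lemma spike_eq (ε : ℝ) (hε : 0 < ε) (tin : Fin 3 → ℝ) :
    spikeMap G3 (fun _ => 1/ε) (fun _ => 0) tin 2
      = min (min (tin 0) (tin 1) + ε) ((tin 0 + tin 1)/2 + ε/2) := by
  set T := min (min (tin 0) (tin 1) + ε) ((tin 0 + tin 1)/2 + ε/2) with hT
  have h2nin : (2 : Fin 3) ∉ G3.Vin := by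
    rw [vin_iff]; decide
  have hmap : IsSpikeMap G3 (fun _ => 1/ε) (fun _ => 0) tin
      (fun v => if v = 2 then T else tin v) := by
    constructor
    · intro v hv
      rcases (vin_iff v).1 hv with h | h <;> subst h <;> simp
    · intro v hv
      have hv2 : v = 2 := by
        have h01 := (vin_iff v).not.1 hv
        push_neg at h01
        have : ∀ u : Fin 3, u ≠ 0 → u ≠ 1 → u = 2 := by decide
        exact this v h01.1 h01.2
      subst hv2
      have hset : {s : ℝ | potential G3 (fun _ => 1/ε) (fun _ => 0)
            (fun v => if v = 2 then T else tin v) 2 s = 1}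
          = {s : ℝ | (1/ε) * relu (s - tin 0) + (1/ε) * relu (s - tin 1) = 1} := by
        ext s
        rw [Set.mem_setOf_eq, Set.mem_setOf_eq, potential_eq]
        rw [if_neg (by decide : ¬ ((0:Fin 3) = 2)), if_neg (by decide : ¬ ((1:Fin 3) = 2))]
      rw [hset]
      simp only [if_pos rfl]
      exact key ε (tin 0) (tin 1) hε
  have hex : ∃ t, IsSpikeMap G3 (fun _ => 1/ε) (fun _ => 0) tin t := ⟨_, hmap⟩
  rw [spikeMap, dif_pos hex]
  obtain ⟨hin, hleast⟩ := hex.choose_spec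
  have h0 : hex.choose 0 = tin 0 := hin 0 ((vin_iff 0).2 (Or.inl rfl))
  have h1 : hex.choose 1 = tin 1 := hin 1 ((vin_iff 1).2 (Or.inr rfl))
  have hl2 := hleast 2 h2nin
  have hset : {s : ℝ | potential G3 (fun _ => 1/ε) (fun _ => 0) hex.choose 2 s = 1}
      = {s : ℝ | (1/ε) * relu (s - tin 0) + (1/ε) * relu (s - tin 1) = 1} := by
    ext s
    rw [Set.mem_setOf_eq, Set.mem_setOf_eq, potential_eq, h0, h1]
  rw [hset] at hl2
  exact hl2.unique (key ε (tin 0) (tin 1) hε)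

noncomputable def Psi (d0 : ℕ) (ε : ℝ) (hε : 0 < ε) (a : Fin d0 → ℝ) (b c d : ℝ) :
    AffSNN d0 1 where
  n := 3
  din := 2
  dout := 1
  G := G3
  w := fun _ => 1/ε
  dl := fun _ => 0
  ein := ![0, 1]
  eout := ![2]
  Win := fun i j => if i = 0 then -a j else 0
  bin := ![-b, 0]
  Wout := fun _ _ => -c
  bout := fun _ => d
  w_pos := fun e _ => by positivity
  dl_nonneg := fun e _ => le_rfl
  ein_inj := by decide
  ein_range := by
    ext v; simp only [Set.mem_range, NetworkGraph.Vin, Set.mem_setOf_eq]; revert v; decide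
  eout_inj := fun i j _ => Subsingleton.elim i j
  eout_range := by
    ext v; simp only [Set.mem_range, NetworkGraph.Vout, Set.mem_setOf_eq]; revert v; decide

lemma real_eq (d0 : ℕ) (ε : ℝ) (hε : 0 < ε) (a : Fin d0 → ℝ) (b c d : ℝ)
    (x : Fin d0 → ℝ) :
    (Psi d0 ε hε a b c d).real x 0
      = -c * spikeMap G3 (fun _ => 1/ε) (fun _ => 0)
          (Function.extend ![0, 1] ![-(∑ i, a i * x i) - b, (0:ℝ)] (fun _ => 0)) 2 + d := by
  have hx'eq : (Matrix.mulVec (fun i j => if i = 0 then -a j else 0) x + ![-b, 0])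
      = ![-(∑ i, a i * x i) - b, (0:ℝ)] := by
    funext i
    fin_cases i
    · show (Matrix.mulVec ((fun i j => if i = 0 then -a j else 0) : Matrix (Fin 2) (Fin d0) ℝ) x + ![-b, 0]) 0
          = ![-(∑ i, a i * x i) - b, (0:ℝ)] 0
      simp only [Pi.add_apply, Matrix.mulVec, dotProduct, Matrix.cons_val_zero]
      simp only [if_true]
      have h : ∑ j, -a j * x j = -(∑ j, a j * x j) := by
        rw [← Finset.sum_neg_distrib]
        exact Finset.sum_congr rfl fun j _ => by ring
      rw [h]; ring
    · show (Matrix.mulVec ((fun i j => if i = 0 then -a j else 0) : Matrix (Fin 2) (Fin d0) ℝ) x + ![-b, 0]) 1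
          = ![-(∑ i, a i * x i) - b, (0:ℝ)] 1
      simp only [Pi.add_apply, Matrix.mulVec, dotProduct, Matrix.cons_val_one,
        Matrix.head_cons]
      have h : ∑ j, (if (1:Fin 2) = 0 then -a j else 0) * x j = 0 := by
        refine Finset.sum_eq_zero fun j _ => ?_
        rw [if_neg (by decide)]; ring
      rw [h]; ring
  simp only [AffSNN.real, Psi, affineReal, hx'eq, Pi.add_apply, snnReal,
    Matrix.cons_val_fin_one, Matrix.mulVec, dotProduct, Fin.sum_univ_one]
  erw [Fin.sum_univ_one, hx'eq]
  rfl

end St8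


/-- Lemma: approximation of a ridge function. For every
`a ∈ ℝ^{d0}`, `b, c, d ∈ ℝ` and `ε > 0` there is an affine SNN whose realization is
within `|c|·ε` of `x ↦ c·max{aᵀx + b, 0} + d` everywhere, of size at most `d0 + 5`,
all of whose weights are bounded in absolute value by
`max{1/ε, ‖a‖_∞, |b|, |c|, |d|}`, and whose synaptic weights are at least `1/ε`. -/
theorem statement8 (d0 : ℕ) (hd0 : 0 < d0) (ε : ℝ) (hε : 0 < ε)
    (a : Fin d0 → ℝ) (b c d : ℝ) :
    ∃ Ψ : AffSNN d0 1,
      (∀ x : Fin d0 → ℝ,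
        |Ψ.real x 0 - c * max (∑ i, a i * x i + b) 0 - d| ≤ |c| * ε) ∧
      Ψ.size ≤ d0 + 5 ∧
      Ψ.weightsBddAbove (max (1 / ε) (max ‖a‖ (max |b| (max |c| |d|)))) ∧
      Ψ.synBddBelow (1 / ε) := by
  have h1C : 1/ε ≤ max (1 / ε) (max ‖a‖ (max |b| (max |c| |d|))) := le_max_left _ _
  have haC : ‖a‖ ≤ max (1 / ε) (max ‖a‖ (max |b| (max |c| |d|))) :=
    le_max_of_le_right (le_max_left _ _)
  have hbC : |b| ≤ max (1 / ε) (max ‖a‖ (max |b| (max |c| |d|))) :=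
    le_max_of_le_right (le_max_of_le_right (le_max_left _ _))
  have hcC : |c| ≤ max (1 / ε) (max ‖a‖ (max |b| (max |c| |d|))) :=
    le_max_of_le_right (le_max_of_le_right (le_max_of_le_right (le_max_left _ _)))
  have hdC : |d| ≤ max (1 / ε) (max ‖a‖ (max |b| (max |c| |d|))) :=
    le_max_of_le_right (le_max_of_le_right (le_max_of_le_right (le_max_right _ _)))
  have h0C : 0 ≤ max (1 / ε) (max ‖a‖ (max |b| (max |c| |d|))) :=
    le_trans (by positivity) h1C
  refine ⟨St8.Psi d0 ε hε a b c d, ?_, ?_, ?_, ?_⟩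
  · -- realization estimate
    intro x
    rw [St8.real_eq d0 ε hε a b c d x]
    have hinj : Function.Injective (![0, 1] : Fin 2 → Fin 3) := by decide
    set y := ∑ i, a i * x i + b with hy
    set t0 : ℝ := -(∑ i, a i * x i) - b with ht0d
    have ht0y : t0 = -y := by rw [ht0d, hy]; ring
    set tin : Fin 3 → ℝ := Function.extend ![0, 1] ![t0, (0:ℝ)] (fun _ => 0) with htin
    have h0 : tin 0 = t0 := by
      simpa using hinj.extend_apply ![t0, (0:ℝ)] (fun _ => 0) 0
    have h1 : tin 1 = 0 := by
      simpa using hinj.extend_apply ![t0, (0:ℝ)] (fun _ => 0) 1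
    rw [St8.spike_eq ε hε tin, h0, h1]
    have hM0 : (0:ℝ) ≤ max y 0 := le_max_right _ _
    have hMy : y ≤ max y 0 := le_max_left _ _
    have hmin : min t0 0 = -max y 0 := by
      rw [ht0y, ← neg_zero, min_neg_neg, neg_zero]
    set T := min (min t0 0 + ε) ((t0 + 0)/2 + ε/2) with hTd
    have hTa : T ≤ -max y 0 + ε :=
      le_trans (min_le_left _ _) (le_of_eq (by rw [hmin]))
    have hTb : -max y 0 ≤ T := by
      refine le_min ?_ ?_
      · rw [hmin]; linarith
      · rw [ht0y]; linarith
    have hkey : -c * T + d - c * max y 0 - d = -(c * (T + max y 0)) := by ring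
    rw [hkey, abs_neg, abs_mul]
    refine mul_le_mul_of_nonneg_left ?_ (abs_nonneg c)
    rw [abs_le]
    constructor <;> linarith
  · -- size
    simp only [AffSNN.size, St8.Psi]
    have h1 : {e : Fin 3 × Fin 3 | e ∈ St8.G3.E ∧ (fun _ : Fin 3 × Fin 3 => 1/ε) e ≠ 0}.ncard
        ≤ 2 := by
      have hs : {e : Fin 3 × Fin 3 | e ∈ St8.G3.E ∧ (fun _ : Fin 3 × Fin 3 => 1/ε) e ≠ 0}
          = (St8.G3.E : Set (Fin 3 × Fin 3)) := by
        ext e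
        simp [ne_of_gt hε]
      rw [hs, Set.ncard_coe_finset]
      decide
    have h2 : {e : Fin 3 × Fin 3 | e ∈ St8.G3.E ∧ (fun _ : Fin 3 × Fin 3 => (0:ℝ)) e ≠ 0}.ncard
        ≤ 0 := by simp
    have h3 : {p : Fin 2 × Fin d0 | (fun i j => if i = 0 then -a j else 0) p.1 p.2 ≠ 0}.ncard
        ≤ d0 := by
      have hsub : {p : Fin 2 × Fin d0 | (fun i j => if i = 0 then -a j else 0) p.1 p.2 ≠ 0}
          ⊆ (({0} ×ˢ Finset.univ : Finset (Fin 2 × Fin d0)) : Set (Fin 2 × Fin d0)) := by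
        intro p hp
        simp only [Set.mem_setOf_eq] at hp
        by_cases h : p.1 = 0
        · rw [Finset.mem_coe, Finset.mem_product]
          exact ⟨by simp [h], Finset.mem_univ _⟩
        · simp only [if_neg h] at hp
          exact absurd rfl hp
      refine le_trans (Set.ncard_le_ncard hsub (Finset.finite_toSet _)) ?_
      rw [Set.ncard_coe_finset, Finset.card_product]
      simp
    have h4 : {p : Fin 1 × Fin 1 | (fun _ _ : Fin 1 => -c) p.1 p.2 ≠ 0}.ncard ≤ 1 := by
      refine le_trans (Set.ncard_le_ncard (Set.subset_univ _) Set.finite_univ) ?_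
      rw [Set.ncard_univ]
      simp
    have h5 : {i : Fin 2 | (![-b, 0] : Fin 2 → ℝ) i ≠ 0}.ncard ≤ 1 := by
      have hsub : {i : Fin 2 | (![-b, 0] : Fin 2 → ℝ) i ≠ 0} ⊆ {0} := by
        intro i hi
        simp only [Set.mem_setOf_eq] at hi
        fin_cases i
        · simp
        · simp at hi
      refine le_trans (Set.ncard_le_ncard hsub (Set.finite_singleton _)) ?_
      simp
    have h6 : {i : Fin 1 | (fun _ : Fin 1 => d) i ≠ 0}.ncard ≤ 1 := by
      refine le_trans (Set.ncard_le_ncard (Set.subset_univ _) Set.finite_univ) ?_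
      rw [Set.ncard_univ]
      simp
    exact le_trans
      (Nat.add_le_add (Nat.add_le_add (Nat.add_le_add (Nat.add_le_add (Nat.add_le_add h1 h2) h3)
        h4) h5) h6)
      (by omega)
  · -- weight bound
    simp only [AffSNN.weightsBddAbove, St8.Psi]
    refine ⟨fun e _ => ?_, fun e _ => ?_, fun i j => ?_, fun i => ?_, fun i j => ?_, fun i => ?_⟩
    · show |1/ε| ≤ _
      rw [abs_of_pos (by positivity : (0:ℝ) < 1/ε)]
      exact h1C
    · show |(0:ℝ)| ≤ _
      rw [abs_zero]; exact h0C
    · show |if i = 0 then -a j else 0| ≤ _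
      by_cases h : i = 0
      · rw [if_pos h, abs_neg]
        calc |a j| = ‖a j‖ := (Real.norm_eq_abs _).symm
          _ ≤ ‖a‖ := norm_le_pi_norm a j
          _ ≤ _ := haC
      · rw [if_neg h, abs_zero]; exact h0C
    · fin_cases i
      · show |(-b : ℝ)| ≤ _
        rw [abs_neg]; exact hbC
      · show |(0:ℝ)| ≤ _
        rw [abs_zero]; exact h0C
    · show |(-c : ℝ)| ≤ _
      rw [abs_neg]; exact hcC
    · show |d| ≤ _
      exact hdC
  · -- synaptic lower bound
    exact fun e _ => le_rfl
end

section
/- Let d_0 ∈ ℕ and ε > 0, and let Ω ⊂ ℝ^{d_0} be a compact domain. Then for every continuous function f ∈ C(Ω) there exists an affine SNN Ψ^f such that sup_{x∈Ω} |f(x) − R(Ψ^f)(x)| ≤ ε. In other words, realizations of affine SNNs are universal approximators of continuous functions on compact domains. -/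
open scoped BigOperators

noncomputable section SNNUniv
namespace SNNUniv

open Finset

lemma relu_of_nonpos {t : ℝ} (h : t ≤ 0) : relu t = 0 := max_eq_right h

lemma relu_nonneg (t : ℝ) : 0 ≤ relu t := le_max_right _ _

lemma continuous_relu : Continuous relu := continuous_id.max continuous_const

variable {m K : ℕ}

/-- input nodes -/
abbrev inV (m K : ℕ) (i : Fin (m * K)) : Fin (m * K + m) := Fin.castAdd m i
/-- output nodes -/
abbrev outV (m K : ℕ) (j : Fin m) : Fin (m * K + m) := Fin.natAdd (m * K) j

lemma inV_injective : Function.Injective (inV m K) := fun a b h => by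
  apply Fin.ext; simpa using congrArg Fin.val h

lemma outV_injective : Function.Injective (outV m K) := fun a b h => by
  apply Fin.ext
  have := congrArg Fin.val h
  simpa using this

lemma inV_ne_outV (i : Fin (m * K)) (j : Fin m) : inV m K i ≠ outV m K j := by
  intro h
  have := congrArg Fin.val h
  have hi := i.isLt
  simp [Fin.coe_castAdd, Fin.coe_natAdd] at this
  omega

/-- edges of the bipartite graph -/
def bipE (m K : ℕ) : Finset (Fin (m * K + m) × Fin (m * K + m)) :=
  Finset.univ.image (fun i : Fin (m * K) => (inV m K i, outV m K (finProdFinEquiv.symm i).1))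

lemma mem_bipE {u v : Fin (m * K + m)} :
    (u, v) ∈ bipE m K ↔
      ∃ i : Fin (m * K), u = inV m K i ∧ v = outV m K (finProdFinEquiv.symm i).1 := by
  simp only [bipE, Finset.mem_image, Finset.mem_univ, true_and, Prod.mk.injEq]
  constructor
  · rintro ⟨i, h1, h2⟩; exact ⟨i, h1.symm, h2.symm⟩
  · rintro ⟨i, h1, h2⟩; exact ⟨i, h1.symm, h2.symm⟩

lemma bip_cases (v : Fin (m * K + m)) :
    (∃ i, v = inV m K i) ∨ (∃ j, v = outV m K j) :=
  Fin.addCases (fun i => Or.inl ⟨i, rfl⟩) (fun j => Or.inr ⟨j, rfl⟩) v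

lemma outV_mem_E (hK : 0 < K) (j : Fin m) :
    (inV m K (finProdFinEquiv (j, ⟨0, hK⟩)), outV m K j) ∈ bipE m K :=
  mem_bipE.mpr ⟨_, rfl, by simp⟩

/-- the bipartite network graph -/
def bipG (m K : ℕ) (hK : 0 < K) : NetworkGraph (Fin (m * K + m)) where
  E := bipE m K
  acyclic := by
    have h : Subrelation (fun u v : Fin (m * K + m) => (u, v) ∈ bipE m K)
        (fun u v : Fin (m * K + m) => (u : ℕ) < (v : ℕ)) := by
      intro u v huv
      rcases mem_bipE.mp huv with ⟨i, rfl, rfl⟩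
      have hi := i.isLt
      have h1 : ((inV m K i : Fin (m * K + m)) : ℕ) = (i : ℕ) := rfl
      have h2 : ((outV m K (finProdFinEquiv.symm i).1 : Fin (m * K + m)) : ℕ)
          = m * K + ((finProdFinEquiv.symm i).1 : ℕ) := rfl
      omega
    exact Subrelation.wf h (measure (fun v : Fin (m * K + m) => (v : ℕ))).wf
  noIsolated := by
    intro v
    rcases bip_cases v with ⟨i, rfl⟩ | ⟨j, rfl⟩
    · exact Or.inr ⟨_, mem_bipE.mpr ⟨i, rfl, rfl⟩⟩
    · exact Or.inl ⟨_, outV_mem_E hK j⟩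

lemma bipG_E (hK : 0 < K) : (bipG m K hK).E = bipE m K := rfl

lemma bip_Vin (hK : 0 < K) : (bipG m K hK).Vin = Set.range (inV m K) := by
  ext v
  simp only [NetworkGraph.Vin, Set.mem_setOf_eq, Set.mem_range, bipG_E]
  constructor
  · intro hv
    rcases bip_cases v with ⟨i, rfl⟩ | ⟨j, rfl⟩
    · exact ⟨i, rfl⟩
    · exact absurd (outV_mem_E hK j) (hv _)
  · rintro ⟨i, rfl⟩ u hu
    rcases mem_bipE.mp hu with ⟨i', _, hv⟩
    exact inV_ne_outV i _ hv

lemma bip_Vout (hK : 0 < K) : (bipG m K hK).Vout = Set.range (outV m K) := by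
  ext v
  simp only [NetworkGraph.Vout, Set.mem_setOf_eq, Set.mem_range, bipG_E]
  constructor
  · intro hv
    rcases bip_cases v with ⟨i, rfl⟩ | ⟨j, rfl⟩
    · exact absurd (mem_bipE.mpr ⟨i, rfl, rfl⟩) (hv _)
    · exact ⟨j, rfl⟩
  · rintro ⟨j, rfl⟩ u hu
    rcases mem_bipE.mp hu with ⟨i', h1, _⟩
    exact inV_ne_outV i' _ h1.symm

lemma pred_eq (hK : 0 < K) (j : Fin m) :
    Finset.univ.filter (fun u => (u, outV m K j) ∈ bipE m K)
      = Finset.univ.image (fun r : Fin K => inV m K (finProdFinEquiv (j, r))) := by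
  ext u
  simp only [Finset.mem_filter, Finset.mem_univ, true_and, Finset.mem_image, mem_bipE]
  constructor
  · rintro ⟨i, rfl, hj⟩
    have hj' : (finProdFinEquiv.symm i).1 = j := (outV_injective hj).symm
    refine ⟨(finProdFinEquiv.symm i).2, ?_⟩
    have hq : finProdFinEquiv ((finProdFinEquiv.symm i).1, (finProdFinEquiv.symm i).2) = i := by
      rw [Prod.mk.eta]
      exact finProdFinEquiv.apply_symm_apply i
    rw [← hj', hq]
  · rintro ⟨r, rfl⟩
    exact ⟨finProdFinEquiv (j, r), rfl, by rw [Equiv.symm_apply_apply]⟩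

/-- the potential at an output node, as a simple function of time -/
def PP (W : ℝ) (b : Fin K → ℝ) (s : ℝ) : ℝ := ∑ r, W * relu (s - b r)

lemma PP_cont (W : ℝ) (b : Fin K → ℝ) : Continuous (PP W b) := by
  unfold PP
  exact continuous_finset_sum _ fun r _ =>
    continuous_const.mul (continuous_relu.comp (continuous_id.sub continuous_const))

lemma spike_bounds (hK : 0 < K) {W : ℝ} (hW : 0 < W) (b : Fin K → ℝ) :
    IsLeast {s : ℝ | PP W b s = 1} (sInf {s : ℝ | PP W b s = 1}) ∧
      Finset.univ.inf' ⟨⟨0, hK⟩, Finset.mem_univ _⟩ b ≤ sInf {s : ℝ | PP W b s = 1} ∧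
      sInf {s : ℝ | PP W b s = 1} ≤ Finset.univ.inf' ⟨⟨0, hK⟩, Finset.mem_univ _⟩ b + 1 / W := by
  have hne0 : (Finset.univ : Finset (Fin K)).Nonempty := ⟨⟨0, hK⟩, Finset.mem_univ _⟩
  set Mb := Finset.univ.inf' ⟨⟨0, hK⟩, Finset.mem_univ _⟩ b with hMb
  have hlow : ∀ s ≤ Mb, PP W b s = 0 := by
    intro s hs
    refine Finset.sum_eq_zero fun r _ => ?_
    rw [relu_of_nonpos (by
      have : Mb ≤ b r := Finset.inf'_le _ (Finset.mem_univ r)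
      linarith), mul_zero]
  have hup : 1 ≤ PP W b (Mb + 1 / W) := by
    obtain ⟨r0, _, hr0⟩ := Finset.exists_mem_eq_inf' hne0 b
    have h1 : W * relu (Mb + 1 / W - b r0) = 1 := by
      rw [← hr0]
      have h0 : Mb + 1 / W - Mb = 1 / W := by ring
      rw [h0]
      have h1W : (0:ℝ) ≤ 1 / W := by positivity
      rw [show relu (1 / W) = 1 / W from max_eq_left h1W]
      field_simp
    have h2 : W * relu (Mb + 1 / W - b r0) ≤ ∑ r : Fin K, W * relu (Mb + 1 / W - b r) :=
      Finset.single_le_sum (f := fun r => W * relu (Mb + 1 / W - b r)) (fun r _ => mul_nonneg hW.le (relu_nonneg _)) (Finset.mem_univ r0)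
    rw [h1] at h2
    exact h2
  have hIVT : ∃ s ∈ Set.Icc Mb (Mb + 1 / W), PP W b s = 1 := by
    have hsub := intermediate_value_Icc (by nlinarith [one_div_pos.mpr hW] : Mb ≤ Mb + 1 / W) (PP_cont W b).continuousOn
    have h1 : (1:ℝ) ∈ Set.Icc (PP W b Mb) (PP W b (Mb + 1 / W)) :=
      ⟨by rw [hlow Mb le_rfl]; norm_num, hup⟩
    obtain ⟨s, hs, hPs⟩ := hsub h1
    exact ⟨s, hs, hPs⟩
  obtain ⟨s1, hs1, hPs1⟩ := hIVT
  have hne : {s : ℝ | PP W b s = 1}.Nonempty := ⟨s1, hPs1⟩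
  have hbdd : BddBelow {s : ℝ | PP W b s = 1} := by
    refine ⟨Mb, fun s hs => ?_⟩
    by_contra h
    push_neg at h
    rw [Set.mem_setOf_eq, hlow s h.le] at hs
    norm_num at hs
  have hcl : IsClosed {s : ℝ | PP W b s = 1} := isClosed_eq (PP_cont W b) continuous_const
  have hmem := hcl.csInf_mem hne hbdd
  refine ⟨⟨hmem, fun s hs => csInf_le hbdd hs⟩, ?_, ?_⟩
  · refine le_csInf hne fun s hs => ?_
    by_contra hc
    push_neg at hc
    rw [Set.mem_setOf_eq, hlow s hc.le] at hs
    norm_num at hs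
  · exact le_trans (csInf_le hbdd hPs1) hs1.2

lemma potential_out (hK : 0 < K) (W : ℝ) (t : Fin (m * K + m) → ℝ) (j : Fin m) (s : ℝ) :
    potential (bipG m K hK) (fun _ => W) (fun _ => 0) t (outV m K j) s
      = PP W (fun r => t (inV m K (finProdFinEquiv (j, r)))) s := by
  unfold potential PP
  rw [bipG_E, pred_eq hK j, Finset.sum_image]
  · simp
  · intro a _ b _ h
    have h2 := finProdFinEquiv.injective (inV_injective h)
    simpa using congrArg Prod.snd h2

/-- explicit spike map for the bipartite graph -/
def bip_t (m K : ℕ) (W : ℝ) (tin : Fin (m * K + m) → ℝ) : Fin (m * K + m) → ℝ :=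
  Fin.addCases (fun i => tin (inV m K i))
    (fun j => sInf {s : ℝ | PP W (fun r => tin (inV m K (finProdFinEquiv (j, r)))) s = 1})

lemma bip_isSpikeMap (hK : 0 < K) {W : ℝ} (hW : 0 < W) (tin : Fin (m * K + m) → ℝ) :
    IsSpikeMap (bipG m K hK) (fun _ => W) (fun _ => 0) tin (bip_t m K W tin) := by
  constructor
  · intro v hv
    rw [bip_Vin hK] at hv
    obtain ⟨i, rfl⟩ := hv
    exact Fin.addCases_left i
  · intro v hv
    rw [bip_Vin hK] at hv
    rcases bip_cases v with ⟨i, rfl⟩ | ⟨j, rfl⟩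
    · exact absurd ⟨i, rfl⟩ hv
    · have hset : {s : ℝ | potential (bipG m K hK) (fun _ => W) (fun _ => 0)
          (bip_t m K W tin) (outV m K j) s = 1}
          = {s : ℝ | PP W (fun r => tin (inV m K (finProdFinEquiv (j, r)))) s = 1} := by
        ext s
        rw [Set.mem_setOf_eq, potential_out hK W _ j s]
        have : (fun r => bip_t m K W tin (inV m K (finProdFinEquiv (j, r))))
            = fun r => tin (inV m K (finProdFinEquiv (j, r))) := by
          funext r
          exact Fin.addCases_left _
        rw [this]
        exact Iff.rfl
      rw [hset]
      have heval : bip_t m K W tin (outV m K j)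
          = sInf {s : ℝ | PP W (fun r => tin (inV m K (finProdFinEquiv (j, r)))) s = 1} :=
        Fin.addCases_right j
      rw [heval]
      exact (spike_bounds hK hW _).1

lemma spikeMap_out (hK : 0 < K) {W : ℝ} (hW : 0 < W) (tin : Fin (m * K + m) → ℝ)
    {t' : Fin (m * K + m) → ℝ}
    (h : IsSpikeMap (bipG m K hK) (fun _ => W) (fun _ => 0) tin t') (j : Fin m) :
    t' (outV m K j)
      = sInf {s : ℝ | PP W (fun r => tin (inV m K (finProdFinEquiv (j, r)))) s = 1} := by
  have hnotin : outV m K j ∉ (bipG m K hK).Vin := by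
    rw [bip_Vin hK]
    rintro ⟨i, hi⟩
    exact inV_ne_outV i j hi
  have hle := h.2 _ hnotin
  have hset : {s : ℝ | potential (bipG m K hK) (fun _ => W) (fun _ => 0) t' (outV m K j) s = 1}
      = {s : ℝ | PP W (fun r => tin (inV m K (finProdFinEquiv (j, r)))) s = 1} := by
    ext s
    rw [Set.mem_setOf_eq, potential_out hK W _ j s]
    have : (fun r => t' (inV m K (finProdFinEquiv (j, r))))
        = fun r => tin (inV m K (finProdFinEquiv (j, r))) := by
      funext r
      exact h.1 _ (by rw [bip_Vin hK]; exact ⟨_, rfl⟩)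
    rw [this]
    exact Iff.rfl
  rw [hset] at hle
  exact (hle.csInf_eq).symm

lemma spikeMap_eq_out (hK : 0 < K) {W : ℝ} (hW : 0 < W) (tin : Fin (m * K + m) → ℝ)
    (j : Fin m) :
    spikeMap (bipG m K hK) (fun _ => W) (fun _ => 0) tin (outV m K j)
      = sInf {s : ℝ | PP W (fun r => tin (inV m K (finProdFinEquiv (j, r)))) s = 1} := by
  have hex : ∃ t, IsSpikeMap (bipG m K hK) (fun _ => W) (fun _ => 0) tin t :=
    ⟨bip_t m K W tin, bip_isSpikeMap hK hW tin⟩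
  unfold spikeMap
  rw [dif_pos hex]
  exact spikeMap_out hK hW tin hex.choose_spec j

/-- The bipartite affine SNN. -/
def buildSNN (d0 m K : ℕ) (hK : 0 < K) (W : ℝ) (hW : 0 < W)
    (α : Fin m → Fin K → Fin d0 → ℝ) (β : Fin m → Fin K → ℝ)
    (c : Fin m → ℝ) (c0 : ℝ) : AffSNN d0 1 where
  n := m * K + m
  din := m * K
  dout := m
  G := bipG m K hK
  w := fun _ => W
  dl := fun _ => 0
  ein := inV m K
  eout := outV m K
  Win := fun i l => α (finProdFinEquiv.symm i).1 (finProdFinEquiv.symm i).2 l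
  bin := fun i => β (finProdFinEquiv.symm i).1 (finProdFinEquiv.symm i).2
  Wout := fun _ j => c j
  bout := fun _ => c0
  w_pos := fun _ _ => hW
  dl_nonneg := fun _ _ => le_rfl
  ein_inj := inV_injective
  ein_range := (bip_Vin hK).symm
  eout_inj := outV_injective
  eout_range := (bip_Vout hK).symm

lemma L1 (d0 m K : ℕ) (hK : 0 < K)
    (α : Fin m → Fin K → Fin d0 → ℝ) (β : Fin m → Fin K → ℝ) (c : Fin m → ℝ) (c0 : ℝ)
    {δ : ℝ} (hδ : 0 < δ) :
    ∃ Ψ : AffSNN d0 1, ∀ x : Fin d0 → ℝ,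
      |Ψ.real x 0 - ((∑ j, c j * Finset.univ.inf' ⟨⟨0, hK⟩, Finset.mem_univ _⟩
          (fun r => (∑ l, α j r l * x l) + β j r)) + c0)| ≤ δ := by
  have hW : (0:ℝ) < (∑ j, |c j|) / δ + 1 := by positivity
  set W : ℝ := (∑ j, |c j|) / δ + 1 with hWdef
  refine ⟨buildSNN d0 m K hK W hW α β c c0, fun x => ?_⟩
  set Win : Matrix (Fin (m * K)) (Fin d0) ℝ :=
    fun i l => α (finProdFinEquiv.symm i).1 (finProdFinEquiv.symm i).2 l with hWin
  set bin : Fin (m * K) → ℝ :=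
    fun i => β (finProdFinEquiv.symm i).1 (finProdFinEquiv.symm i).2 with hbin
  set a : Fin (m * K) → ℝ := Win.mulVec x + bin with ha
  set tin : Fin (m * K + m) → ℝ := Function.extend (inV m K) a (fun _ => 0) with htin
  set b : Fin m → Fin K → ℝ := fun j r => (∑ l, α j r l * x l) + β j r with hb
  have hbval : ∀ j r, tin (inV m K (finProdFinEquiv (j, r))) = b j r := by
    intro j r
    rw [htin, inV_injective.extend_apply a _ (finProdFinEquiv (j, r))]
    rw [ha, hb]
    simp only [Pi.add_apply, Matrix.mulVec, dotProduct, hWin, hbin,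
      Equiv.symm_apply_apply]
  have hreal : (buildSNN d0 m K hK W hW α β c c0).real x 0
      = (∑ j, c j * sInf {s : ℝ | PP W (b j) s = 1}) + c0 := by
    have hreal0 : (buildSNN d0 m K hK W hW α β c c0).real x 0
        = affineReal (bipG m K hK) (fun _ => W) (fun _ => 0) (inV m K) (outV m K)
            Win bin (fun _ j => c j) (fun _ => c0) x 0 := rfl
    rw [hreal0]
    unfold affineReal
    simp only [Pi.add_apply, Matrix.mulVec, dotProduct]
    congr 1
    refine Finset.sum_congr rfl fun j _ => ?_
    congr 1
    show spikeMap (bipG m K hK) (fun _ => W) (fun _ => 0) tin (outV m K j) = _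
    rw [spikeMap_eq_out hK hW tin j]
    congr 1
    ext s
    have : (fun r => tin (inV m K (finProdFinEquiv (j, r)))) = b j := funext fun r => hbval j r
    rw [this]
  rw [hreal]
  have hkey : ∀ j : Fin m, |sInf {s : ℝ | PP W (b j) s = 1}
      - Finset.univ.inf' ⟨⟨0, hK⟩, Finset.mem_univ _⟩ (b j)| ≤ 1 / W := by
    intro j
    obtain ⟨_, h1, h2⟩ := spike_bounds hK hW (b j)
    rw [abs_le]
    constructor <;> [linarith [one_div_pos.mpr hW]; linarith]
  have hdiff : ((∑ j, c j * sInf {s : ℝ | PP W (b j) s = 1}) + c0)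
      - ((∑ j, c j * Finset.univ.inf' ⟨⟨0, hK⟩, Finset.mem_univ _⟩
          (fun r => (∑ l, α j r l * x l) + β j r)) + c0)
      = ∑ j, c j * (sInf {s : ℝ | PP W (b j) s = 1}
          - Finset.univ.inf' ⟨⟨0, hK⟩, Finset.mem_univ _⟩ (b j)) := by
    rw [Finset.sum_congr rfl (fun j _ => mul_sub (c j) _ _), Finset.sum_sub_distrib]
    ring_nf
    rfl
  rw [hdiff]
  calc |∑ j, c j * (sInf {s : ℝ | PP W (b j) s = 1}
          - Finset.univ.inf' ⟨⟨0, hK⟩, Finset.mem_univ _⟩ (b j))|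
      ≤ ∑ j, |c j * (sInf {s : ℝ | PP W (b j) s = 1}
          - Finset.univ.inf' ⟨⟨0, hK⟩, Finset.mem_univ _⟩ (b j))| :=
        Finset.abs_sum_le_sum_abs _ _
    _ ≤ ∑ j, |c j| * (1 / W) := by
        refine Finset.sum_le_sum fun j _ => ?_
        rw [abs_mul]
        exact mul_le_mul_of_nonneg_left (hkey j) (abs_nonneg _)
    _ = (∑ j, |c j|) * (1 / W) := by rw [← Finset.sum_mul]
    _ ≤ δ := by
        rw [mul_one_div, div_le_iff₀ hW]
        have hδ' : δ ≠ 0 := ne_of_gt hδ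
        have hSW : δ * W = (∑ j, |c j|) + δ := by
          rw [hWdef]
          field_simp
        linarith

lemma inf'_neg' {ι : Type*} (s : Finset ι) (h : s.Nonempty) (f : ι → ℝ) :
    s.inf' h (fun a => -f a) = -(s.sup' h f) := by
  apply le_antisymm
  · obtain ⟨a, ha, hav⟩ := Finset.exists_mem_eq_sup' h f
    calc s.inf' h (fun a => -f a) ≤ -f a := Finset.inf'_le _ ha
      _ = -(s.sup' h f) := by rw [hav]
  · exact Finset.le_inf' _ _ fun b hb => neg_le_neg (Finset.le_sup' f hb)

/-- The algebra of finite linear combinations of exponentials of linear functionals. -/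
def expAlg (d0 : ℕ) (Ω : Set (Fin d0 → ℝ)) : Subalgebra ℝ C(Ω, ℝ) where
  carrier := {g | ∃ P : ℕ, 0 < P ∧ ∃ (cc : Fin P → ℝ) (ww : Fin P → Fin d0 → ℝ),
    ∀ x : Ω, g x = ∑ k, cc k * Real.exp (∑ i, ww k i * (x : Fin d0 → ℝ) i)}
  mul_mem' := by
    rintro g h ⟨P, hP, cc, ww, hg⟩ ⟨Q, hQ, dd, vv, hh⟩
    refine ⟨P * Q, Nat.mul_pos hP hQ,
      fun t => cc (finProdFinEquiv.symm t).1 * dd (finProdFinEquiv.symm t).2,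
      fun t => ww (finProdFinEquiv.symm t).1 + vv (finProdFinEquiv.symm t).2, fun x => ?_⟩
    rw [ContinuousMap.mul_apply, hg x, hh x, Finset.sum_mul_sum]
    rw [Fintype.sum_equiv finProdFinEquiv.symm
      (fun t : Fin (P * Q) => cc (finProdFinEquiv.symm t).1 * dd (finProdFinEquiv.symm t).2
        * Real.exp (∑ i, (ww (finProdFinEquiv.symm t).1 + vv (finProdFinEquiv.symm t).2) i
            * (x : Fin d0 → ℝ) i))
      (fun p : Fin P × Fin Q => cc p.1 * dd p.2
        * Real.exp (∑ i, (ww p.1 + vv p.2) i * (x : Fin d0 → ℝ) i))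
      (fun t => rfl)]
    rw [Fintype.sum_prod_type]
    refine Finset.sum_congr rfl fun p _ => Finset.sum_congr rfl fun qq _ => ?_
    simp only [Pi.add_apply, add_mul, Finset.sum_add_distrib, Real.exp_add]
    ring
  one_mem' := by
    refine ⟨1, one_pos, fun _ => 1, fun _ => 0, fun x => ?_⟩
    simp
  add_mem' := by
    rintro g h ⟨P, hP, cc, ww, hg⟩ ⟨Q, hQ, dd, vv, hh⟩
    refine ⟨P + Q, by omega, Fin.append cc dd, Fin.append ww vv, fun x => ?_⟩
    rw [ContinuousMap.add_apply, hg x, hh x, Fin.sum_univ_add]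
    congr 1
    · exact Finset.sum_congr rfl fun i _ => by rw [Fin.append_left, Fin.append_left]
    · exact Finset.sum_congr rfl fun i _ => by rw [Fin.append_right, Fin.append_right]
  zero_mem' := by
    refine ⟨1, one_pos, fun _ => 0, fun _ => 0, fun x => ?_⟩
    simp
  algebraMap_mem' := by
    intro r
    refine ⟨1, one_pos, fun _ => r, fun _ => 0, fun x => ?_⟩
    simp [Algebra.algebraMap_eq_smul_one]

lemma mem_expAlg_iff {d0 : ℕ} {Ω : Set (Fin d0 → ℝ)} {g : C(Ω, ℝ)} :
    g ∈ expAlg d0 Ω ↔ ∃ P : ℕ, 0 < P ∧ ∃ (cc : Fin P → ℝ) (ww : Fin P → Fin d0 → ℝ),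
      ∀ x : Ω, g x = ∑ k, cc k * Real.exp (∑ i, ww k i * (x : Fin d0 → ℝ) i) :=
  Iff.rfl

lemma expAlg_sep (d0 : ℕ) (Ω : Set (Fin d0 → ℝ)) : (expAlg d0 Ω).SeparatesPoints := by
  intro x y hxy
  have hcoord : ∃ i, (x : Fin d0 → ℝ) i ≠ (y : Fin d0 → ℝ) i := by
    by_contra hcon
    push_neg at hcon
    exact hxy (Subtype.ext (funext hcon))
  obtain ⟨i0, hi0⟩ := hcoord
  have hcont : Continuous fun z : Ω => Real.exp ((z : Fin d0 → ℝ) i0) :=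
    Real.continuous_exp.comp ((continuous_apply i0).comp continuous_subtype_val)
  refine ⟨_, ⟨(⟨fun z : Ω => Real.exp ((z : Fin d0 → ℝ) i0), hcont⟩ : C(Ω, ℝ)), ?_, rfl⟩, ?_⟩
  · refine mem_expAlg_iff.mpr ⟨1, one_pos, fun _ => 1, fun _ => Pi.single i0 1, fun z => ?_⟩
    simp [Pi.single_apply]
  · simpa using fun hcon => hi0 (Real.exp_injective hcon)

lemma tangent_le {d0 : ℕ} (w : Fin d0 → ℝ) (y x : Fin d0 → ℝ) :
    Real.exp (∑ i, w i * y i) * (1 + ∑ i, w i * x i - ∑ i, w i * y i)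
      ≤ Real.exp (∑ i, w i * x i) := by
  have h := Real.add_one_le_exp ((∑ i, w i * x i) - ∑ i, w i * y i)
  have h2 := mul_le_mul_of_nonneg_left h (Real.exp_pos (∑ i, w i * y i)).le
  rw [← Real.exp_add] at h2
  calc Real.exp (∑ i, w i * y i) * (1 + ∑ i, w i * x i - ∑ i, w i * y i)
      = Real.exp (∑ i, w i * y i) * ((∑ i, w i * x i) - (∑ i, w i * y i) + 1) := by ring
    _ ≤ Real.exp ((∑ i, w i * y i) + ((∑ i, w i * x i) - ∑ i, w i * y i)) := h2
    _ = Real.exp (∑ i, w i * x i) := by ring_nf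

lemma tangent_cover (d0 : ℕ) (Ω : Set (Fin d0 → ℝ)) (hΩ : IsCompact Ω) (hne : Ω.Nonempty)
    {P : ℕ} (ww : Fin P → Fin d0 → ℝ) {ε' : ℝ} (hε' : 0 < ε') :
    ∃ (K : ℕ) (hK : 0 < K) (y : Fin K → (Fin d0 → ℝ)),
      ∀ x ∈ Ω, ∀ k : Fin P,
        Finset.univ.sup' ⟨⟨0, hK⟩, Finset.mem_univ _⟩
            (fun r => Real.exp (∑ i, ww k i * y r i)
              * (1 + ∑ i, ww k i * x i - ∑ i, ww k i * y r i))
          ≤ Real.exp (∑ i, ww k i * x i) ∧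
        Real.exp (∑ i, ww k i * x i)
          ≤ Finset.univ.sup' ⟨⟨0, hK⟩, Finset.mem_univ _⟩
            (fun r => Real.exp (∑ i, ww k i * y r i)
              * (1 + ∑ i, ww k i * x i - ∑ i, ww k i * y r i)) + ε' := by
  set ℓ : Fin P → (Fin d0 → ℝ) → (Fin d0 → ℝ) → ℝ := fun k y x =>
    Real.exp (∑ i, ww k i * y i) * (1 + ∑ i, ww k i * x i - ∑ i, ww k i * y i) with hℓ
  set U : (Fin d0 → ℝ) → Set (Fin d0 → ℝ) := fun y =>
    ⋂ k : Fin P, {x | Real.exp (∑ i, ww k i * x i) - ℓ k y x < ε'} with hU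
  have hUopen : ∀ y, IsOpen (U y) := by
    intro y
    refine isOpen_iInter_of_finite fun k => ?_
    have hc1 : Continuous fun x : Fin d0 → ℝ => Real.exp (∑ i, ww k i * x i) - ℓ k y x := by
      refine Continuous.sub ?_ ?_
      · exact Real.continuous_exp.comp (continuous_finset_sum _ fun i _ =>
          continuous_const.mul (continuous_apply i))
      · exact continuous_const.mul (Continuous.sub (continuous_const.add
          (continuous_finset_sum _ fun i _ => continuous_const.mul (continuous_apply i)))
          continuous_const)
    exact isOpen_lt hc1 continuous_const
  have hself : ∀ y, y ∈ U y := by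
    intro y
    refine Set.mem_iInter.mpr fun k => ?_
    simp only [Set.mem_setOf_eq, hℓ]
    have : Real.exp (∑ i, ww k i * y i) * (1 + ∑ i, ww k i * y i - ∑ i, ww k i * y i)
        = Real.exp (∑ i, ww k i * y i) := by ring
    rw [this]
    simpa using hε'
  obtain ⟨t, ht⟩ := hΩ.elim_finite_subcover U hUopen
    (fun x hx => Set.mem_iUnion.mpr ⟨x, hself x⟩)
  have htne : t.Nonempty := by
    obtain ⟨x0, hx0⟩ := hne
    obtain ⟨y0, hy0, _⟩ := Set.mem_iUnion₂.mp (ht hx0)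
    exact ⟨y0, hy0⟩
  have hKpos : 0 < t.card := Finset.card_pos.mpr htne
  refine ⟨t.card, hKpos, fun r => (t.equivFin.symm r : Fin d0 → ℝ), fun x hx k => ?_⟩
  constructor
  · refine Finset.sup'_le _ _ fun r _ => tangent_le (ww k) _ x
  · obtain ⟨y0, hy0, hxU⟩ := Set.mem_iUnion₂.mp (ht hx)
    have hr : (t.equivFin.symm (t.equivFin ⟨y0, hy0⟩) : Fin d0 → ℝ) = y0 := by
      rw [Equiv.symm_apply_apply]
    have hxk := Set.mem_iInter.mp hxU k
    rw [Set.mem_setOf_eq] at hxk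
    have hle : ℓ k y0 x ≤ Finset.univ.sup' ⟨⟨0, hKpos⟩, Finset.mem_univ _⟩
        (fun r => Real.exp (∑ i, ww k i * (t.equivFin.symm r : Fin d0 → ℝ) i)
          * (1 + ∑ i, ww k i * x i - ∑ i, ww k i * (t.equivFin.symm r : Fin d0 → ℝ) i)) := by
      have := Finset.le_sup' (f := fun r => Real.exp (∑ i, ww k i
          * (t.equivFin.symm r : Fin d0 → ℝ) i)
          * (1 + ∑ i, ww k i * x i - ∑ i, ww k i * (t.equivFin.symm r : Fin d0 → ℝ) i))
        (Finset.mem_univ (t.equivFin ⟨y0, hy0⟩))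
      rw [hr] at this
      exact this
    have : Real.exp (∑ i, ww k i * x i) < ℓ k y0 x + ε' := by linarith
    linarith

end SNNUniv
end SNNUniv

/-- Theorem: universality. For every compact `Ω ⊆ ℝ^{d0}`, every
continuous `f : Ω → ℝ` and every `ε > 0` there is an affine SNN `Ψ` with
`sup_{x ∈ Ω} |f(x) − R(Ψ)(x)| ≤ ε`. -/
theorem statement9 (d0 : ℕ) (hd0 : 0 < d0) (ε : ℝ) (hε : 0 < ε)
    (Ω : Set (Fin d0 → ℝ)) (hΩ : IsCompact Ω)
    (f : (Fin d0 → ℝ) → ℝ) (hf : ContinuousOn f Ω) :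
    ∃ Ψ : AffSNN d0 1, ∀ x ∈ Ω, |f x - Ψ.real x 0| ≤ ε := by
  classical
  rcases Set.eq_empty_or_nonempty Ω with rfl | hne
  · obtain ⟨Ψ, -⟩ := SNNUniv.L1 d0 1 1 one_pos (fun _ _ _ => 0) (fun _ _ => 0)
      (fun _ => 0) 0 hε
    exact ⟨Ψ, fun x hx => absurd hx (Set.notMem_empty x)⟩
  haveI : CompactSpace Ω := isCompact_iff_compactSpace.mp hΩ
  have hFc : Continuous fun x : Ω => f x := hf.restrict
  obtain ⟨g, hg⟩ := ContinuousMap.exists_mem_subalgebra_near_continuous_of_separatesPoints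
    (SNNUniv.expAlg d0 Ω) (SNNUniv.expAlg_sep d0 Ω) (fun x : Ω => f x) hFc (ε / 3)
    (by positivity)
  obtain ⟨P, hP, cc, ww, hrep⟩ := SNNUniv.mem_expAlg_iff.mp g.2
  have hccpos : (0:ℝ) < (∑ k, |cc k|) + 1 := by positivity
  set ε' : ℝ := (ε / 3) / ((∑ k, |cc k|) + 1) with hε'def
  have hε' : 0 < ε' := by positivity
  obtain ⟨K, hK, y, hy⟩ := SNNUniv.tangent_cover d0 Ω hΩ hne ww hε'
  set α : Fin P → Fin K → Fin d0 → ℝ := fun j r l =>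
    -(Real.exp (∑ i, ww j i * y r i) * ww j l) with hα
  set β : Fin P → Fin K → ℝ := fun j r =>
    -(Real.exp (∑ i, ww j i * y r i) * (1 - ∑ i, ww j i * y r i)) with hβ
  set c : Fin P → ℝ := fun j => -cc j with hc
  obtain ⟨Ψ, hΨ⟩ := SNNUniv.L1 d0 P K hK α β c 0
    (show (0:ℝ) < ε / 3 by positivity)
  refine ⟨Ψ, fun x hx => ?_⟩
  set Sx : Fin P → ℝ := fun j =>
    Finset.univ.sup' ⟨⟨0, hK⟩, Finset.mem_univ _⟩
      (fun r => Real.exp (∑ i, ww j i * y r i)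
        * (1 + ∑ i, ww j i * x i - ∑ i, ww j i * y r i)) with hSx
  have hGx : (∑ j, c j * Finset.univ.inf' ⟨⟨0, hK⟩, Finset.mem_univ _⟩
      (fun r => (∑ l, α j r l * x l) + β j r)) + 0 = ∑ j, cc j * Sx j := by
    rw [add_zero]
    refine Finset.sum_congr rfl fun j _ => ?_
    have hfeq : (fun r => (∑ l, α j r l * x l) + β j r)
        = fun r => -(Real.exp (∑ i, ww j i * y r i)
            * (1 + ∑ i, ww j i * x i - ∑ i, ww j i * y r i)) := by
      funext r
      have hsum : (∑ l, α j r l * x l)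
          = -(Real.exp (∑ i, ww j i * y r i) * ∑ l, ww j l * x l) := by
        rw [hα, Finset.mul_sum, ← Finset.sum_neg_distrib]
        exact Finset.sum_congr rfl fun l _ => by ring
      rw [hsum, hβ]
      ring
    rw [hfeq]
    erw [SNNUniv.inf'_neg' _ _ (fun r => Real.exp (∑ i, ww j i * y r i)
        * (1 + ∑ i, ww j i * x i - ∑ i, ww j i * y r i))]
    rw [hc, hSx]
    ring
  have h1 : |Ψ.real x 0 - ∑ j, cc j * Sx j| ≤ ε / 3 := by
    have := hΨ x
    rw [hGx] at this
    exact this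
  have hgx : (g : Ω → ℝ) ⟨x, hx⟩ = ∑ k, cc k * Real.exp (∑ i, ww k i * x i) :=
    hrep ⟨x, hx⟩
  have h2 : |(g : Ω → ℝ) ⟨x, hx⟩ - ∑ j, cc j * Sx j| ≤ ε / 3 := by
    rw [hgx]
    have hdiff : (∑ k, cc k * Real.exp (∑ i, ww k i * x i)) - ∑ j, cc j * Sx j
        = ∑ j, cc j * (Real.exp (∑ i, ww j i * x i) - Sx j) := by
      rw [Finset.sum_congr rfl (fun j _ => mul_sub (cc j) _ _), Finset.sum_sub_distrib]
    rw [hdiff]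
    calc |∑ j, cc j * (Real.exp (∑ i, ww j i * x i) - Sx j)|
        ≤ ∑ j, |cc j * (Real.exp (∑ i, ww j i * x i) - Sx j)| :=
          Finset.abs_sum_le_sum_abs _ _
      _ ≤ ∑ j, |cc j| * ε' := by
          refine Finset.sum_le_sum fun j _ => ?_
          rw [abs_mul]
          refine mul_le_mul_of_nonneg_left ?_ (abs_nonneg _)
          obtain ⟨hyl, hyu⟩ := hy x hx j
          rw [abs_le]
          constructor <;> [linarith; linarith]
      _ = (∑ j, |cc j|) * ε' := by rw [← Finset.sum_mul]
      _ ≤ ((∑ j, |cc j|) + 1) * ε' := by nlinarith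
      _ = ε / 3 := by
          rw [hε'def]
          field_simp
  have h3 : |f x - (g : Ω → ℝ) ⟨x, hx⟩| ≤ ε / 3 := by
    have := hg ⟨x, hx⟩
    rw [Real.norm_eq_abs] at this
    rw [abs_sub_comm]
    exact this.le
  calc |f x - Ψ.real x 0|
      ≤ |f x - (g : Ω → ℝ) ⟨x, hx⟩| + |(g : Ω → ℝ) ⟨x, hx⟩ - Ψ.real x 0| :=
        abs_sub_le _ _ _
    _ ≤ |f x - (g : Ω → ℝ) ⟨x, hx⟩| + (|(g : Ω → ℝ) ⟨x, hx⟩ - ∑ j, cc j * Sx j|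
        + |(∑ j, cc j * Sx j) - Ψ.real x 0|) :=
        add_le_add_right (abs_sub_le _ _ _) _
    _ ≤ ε / 3 + (ε / 3 + ε / 3) := by
        have h1' : |(∑ j, cc j * Sx j) - Ψ.real x 0| ≤ ε / 3 := by
          rw [abs_sub_comm]; exact h1
        exact add_le_add h3 (add_le_add h2 h1')
    _ = ε := by ring
end

section
/- Let N ∈ ℕ, let w_1, …, w_N > 0 and d_1, …, d_N ≥ 0. For a tuple of arrival times s = (s_1,…,s_N) ∈ ℝ^N, let T(s) denote the unique t ∈ ℝ with Σ_{i=1}^N w_i · ρ(t − s_i − d_i) = 1, where ρ(t)=max{t,0}. Then for all s, s̃ ∈ ℝ^N: |T(s) − T(s̃)| ≤ ‖s − s̃‖_{ℓ∞}. (That is, the spike time of a spiking neuron with positive weights is 1-Lipschitz in the incoming spike times with respect to the ℓ∞ norm.) -/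
open scoped BigOperators

/-- Lemma: the spike time of a positive-weight neuron is 1-Lipschitz
in the incoming spike times, w.r.t. the ℓ∞ norm. If `t` and `t'` are the (unique)
solutions of `Σ w_i ρ(t − s_i − d_i) = 1` for arrival times `s` and `s'`, then
`|t − t'| ≤ ‖s − s'‖_∞`. -/
theorem statement14 (N : ℕ) (w d : Fin N → ℝ)
    (hw : ∀ i, 0 < w i) (hd : ∀ i, 0 ≤ d i)
    (s s' : Fin N → ℝ) (t t' : ℝ)
    (ht : ∑ i, w i * relu (t - s i - d i) = 1)
    (ht' : ∑ i, w i * relu (t' - s' i - d i) = 1) :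
    |t - t'| ≤ ‖s - s'‖ := by
  
  set ε := ‖s - s'‖ with hε_def
  have hε : 0 ≤ ε := norm_nonneg _
  have hbound : ∀ i, |s i - s' i| ≤ ε := by
    intro i
    have h := norm_le_pi_norm (s - s') i
    simpa [Real.norm_eq_abs] using h
  have key : ∀ (a b : Fin N → ℝ) (u v : ℝ),
      (∑ i, w i * relu (u - a i - d i) = 1) →
      (∑ i, w i * relu (v - b i - d i) = 1) →
      (∀ i, a i ≤ b i + ε) → u ≤ v + ε := by
    intro a b u v hu hv hab
    by_contra h
    push_neg at h
    have h1 : ∀ i, relu (v - b i - d i) ≤ relu (v + ε - a i - d i) := by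
      intro i
      unfold relu
      exact max_le_max (by linarith [hab i]) le_rfl
    obtain ⟨i0, hi0⟩ : ∃ i, 0 < u - a i - d i := by
      by_contra hc
      push_neg at hc
      have hz : ∑ i, w i * relu (u - a i - d i) = 0 := by
        apply Finset.sum_eq_zero
        intro i _
        have : relu (u - a i - d i) = 0 := max_eq_right (hc i)
        simp [this]
      rw [hz] at hu; norm_num at hu
    have hstrict : ∑ i, w i * relu (v + ε - a i - d i)
        < ∑ i, w i * relu (u - a i - d i) := by
      apply Finset.sum_lt_sum
      · intro i _
        apply mul_le_mul_of_nonneg_left _ (hw i).le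
        unfold relu
        exact max_le_max (by linarith) le_rfl
      · refine ⟨i0, Finset.mem_univ _, ?_⟩
        apply mul_lt_mul_of_pos_left _ (hw i0)
        have hr : relu (u - a i0 - d i0) = u - a i0 - d i0 := max_eq_left hi0.le
        rw [hr]
        unfold relu
        exact max_lt (by linarith) hi0
    have hle : (1 : ℝ) ≤ ∑ i, w i * relu (v + ε - a i - d i) := by
      rw [← hv]
      apply Finset.sum_le_sum
      intro i _
      exact mul_le_mul_of_nonneg_left (h1 i) (hw i).le
    rw [hu] at hstrict
    linarith
  have h1 : t ≤ t' + ε := key s s' t t' ht ht' (fun i => by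
    have := abs_le.mp (hbound i); linarith [this.2])
  have h2 : t' ≤ t + ε := key s' s t' t ht' ht (fun i => by
    have := abs_le.mp (hbound i); linarith [this.1])
  rw [abs_sub_le_iff]
  constructor <;> linarith
end

section
/- Let N ∈ ℕ, let w_1, …, w_N > 0 and fix arrival times s_1, …, s_N ∈ ℝ. For a tuple of delays d = (d_1,…,d_N) ∈ [0,∞)^N, let T(d) denote the unique t ∈ ℝ with Σ_{i=1}^N w_i · ρ(t − s_i − d_i) = 1, where ρ(t)=max{t,0}. Then for all delay tuples d, d̃ ∈ [0,∞)^N: |T(d) − T(d̃)| ≤ ‖d − d̃‖_{ℓ∞}. (That is, the spike time of a spiking neuron with positive weights is 1-Lipschitz in the synaptic delays with respect to the ℓ∞ norm.) -/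
open scoped BigOperators

lemma relu_mono : Monotone relu := fun a b h => max_le_max h le_rfl

lemma spike_aux (N : ℕ) (w : Fin N → ℝ) (hw : ∀ i, 0 < w i) (s e : Fin N → ℝ)
    (t u : ℝ) (ht : ∑ i, w i * relu (t - s i - e i) = 1)
    (hu : 1 ≤ ∑ i, w i * relu (u - s i - e i)) : t ≤ u := by
  by_contra h
  push_neg at h
  -- some term at u is positive
  have hpos : ∃ i, 0 < relu (u - s i - e i) := by
    by_contra hc
    push_neg at hc
    have : ∑ i, w i * relu (u - s i - e i) ≤ 0 := by
      apply Finset.sum_nonpos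
      intro i _
      exact mul_nonpos_of_nonneg_of_nonpos (hw i).le (hc i)
    linarith
  obtain ⟨i, hi⟩ := hpos
  have hiu : 0 < u - s i - e i := by
    by_contra hc
    push_neg at hc
    simp [relu, max_eq_right hc] at hi
  have hstrict : ∑ j, w j * relu (u - s j - e j) < ∑ j, w j * relu (t - s j - e j) := by
    apply Finset.sum_lt_sum
    · intro j _
      exact mul_le_mul_of_nonneg_left (relu_mono (by linarith)) (hw j).le
    · refine ⟨i, Finset.mem_univ i, ?_⟩
      apply mul_lt_mul_of_pos_left _ (hw i)
      have h1 : relu (u - s i - e i) = u - s i - e i := max_eq_left hiu.le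
      have h2 : relu (t - s i - e i) = t - s i - e i := max_eq_left (by linarith)
      rw [h1, h2]; linarith
  rw [ht] at hstrict
  linarith

/-- Lemma: the spike time of a positive-weight neuron is 1-Lipschitz
in the synaptic delays, w.r.t. the ℓ∞ norm. If `t` and `t'` are the (unique)
solutions of `Σ w_i ρ(t − s_i − d_i) = 1` for delay tuples `d` and `d'`, then
`|t − t'| ≤ ‖d − d'‖_∞`. -/
theorem statement15 (N : ℕ) (w : Fin N → ℝ) (hw : ∀ i, 0 < w i)
    (s : Fin N → ℝ) (d d' : Fin N → ℝ)
    (hd : ∀ i, 0 ≤ d i) (hd' : ∀ i, 0 ≤ d' i)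
    (t t' : ℝ)
    (ht : ∑ i, w i * relu (t - s i - d i) = 1)
    (ht' : ∑ i, w i * relu (t' - s i - d' i) = 1) :
    |t - t'| ≤ ‖d - d'‖ := by
  set δ := ‖d - d'‖ with hδ
  have hbd : ∀ i, |d i - d' i| ≤ δ := by
    intro i
    have := norm_le_pi_norm (d - d') i
    simpa [Real.norm_eq_abs] using this
  have h1 : t ≤ t' + δ := by
    apply spike_aux N w hw s d t (t' + δ) ht
    rw [← ht']
    apply Finset.sum_le_sum
    intro i _
    apply mul_le_mul_of_nonneg_left _ (hw i).le
    apply relu_mono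
    have := (abs_le.mp (hbd i)).2
    linarith
  have h2 : t' ≤ t + δ := by
    apply spike_aux N w hw s d' t' (t + δ) ht'
    rw [← ht]
    apply Finset.sum_le_sum
    intro i _
    apply mul_le_mul_of_nonneg_left _ (hw i).le
    apply relu_mono
    have := (abs_le.mp (hbd i)).1
    linarith
  rw [abs_sub_le_iff]
  constructor <;> linarith
end

section
/- Let N ∈ ℕ, let b > 0, fix arrival times s_1, …, s_N ∈ ℝ and delays d_1, …, d_N ≥ 0. For a tuple of weights w = (w_1,…,w_N) with w_i ≥ b for all i, let T(w) denote the unique t ∈ ℝ with Σ_{i=1}^N w_i · ρ(t − s_i − d_i) = 1, where ρ(t)=max{t,0}. Then for all weight tuples w, w̃ with all entries ≥ b: |T(w) − T(w̃)| ≤ ‖w − w̃‖_{ℓ∞} / b². (That is, the spike time of a spiking neuron is Lipschitz in the synaptic weights with Lipschitz constant 1/b² with respect to the ℓ∞ norm, provided all weights are bounded below by b.) -/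
open scoped BigOperators

lemma statement16_aux (N : ℕ) (b : ℝ) (hb : 0 < b)
    (s d : Fin N → ℝ)
    (w w' : Fin N → ℝ) (hw : ∀ i, b ≤ w i) (hw' : ∀ i, b ≤ w' i)
    (t t' : ℝ)
    (ht : ∑ i, w i * relu (t - s i - d i) = 1)
    (ht' : ∑ i, w' i * relu (t' - s i - d i) = 1) :
    t' - t ≤ ‖w - w'‖ / b ^ 2 := by
  have hbsq : (0:ℝ) < b ^ 2 := by positivity
  have hnn : (0:ℝ) ≤ ‖w - w'‖ := norm_nonneg _
  rcases le_or_gt t' t with h | h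
  · linarith [div_nonneg hnn hbsq.le]
  -- relu basics
  have hrelu_nonneg : ∀ x : ℝ, 0 ≤ relu x := fun x => le_max_right x 0
  have hrelu_mono : ∀ x y : ℝ, x ≤ y → relu x ≤ relu y :=
    fun x y hxy => max_le_max hxy le_rfl
  -- there is j with positive relu at time t
  have hex : ∃ j, 0 < t - s j - d j := by
    by_contra hcon
    push_neg at hcon
    have : ∑ i, w i * relu (t - s i - d i) = 0 := by
      apply Finset.sum_eq_zero
      intro i _
      have : relu (t - s i - d i) = 0 := by
        simp [relu, max_eq_right (hcon i)]
      rw [this, mul_zero]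
    rw [this] at ht; norm_num at ht
  obtain ⟨j, hj⟩ := hex
  -- sum of relus at time t is ≤ 1/b
  have hsum_relu : ∑ i, relu (t - s i - d i) ≤ 1 / b := by
    rw [le_div_iff₀ hb, ← ht, Finset.sum_mul]
    apply Finset.sum_le_sum
    intro i _
    rw [mul_comm]
    exact mul_le_mul_of_nonneg_right (hw i) (hrelu_nonneg _)
  -- |entries of w - w'| ≤ ‖w - w'‖
  have hent : ∀ i, |w i - w' i| ≤ ‖w - w'‖ := by
    intro i
    have := norm_le_pi_norm (w - w') i
    simpa [Real.norm_eq_abs] using this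
  -- P(w', t) ≥ 1 - ‖w-w'‖/b
  have hP : 1 - ‖w - w'‖ / b ≤ ∑ i, w' i * relu (t - s i - d i) := by
    have h1 : 1 - ∑ i, w' i * relu (t - s i - d i)
        = ∑ i, (w i - w' i) * relu (t - s i - d i) := by
      rw [← ht, ← Finset.sum_sub_distrib]
      congr 1; ext i; ring
    have h2 : ∑ i, (w i - w' i) * relu (t - s i - d i) ≤ ‖w - w'‖ / b := by
      calc ∑ i, (w i - w' i) * relu (t - s i - d i)
          ≤ ∑ i, ‖w - w'‖ * relu (t - s i - d i) := by
            apply Finset.sum_le_sum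
            intro i _
            exact mul_le_mul_of_nonneg_right
              ((le_abs_self _).trans (hent i)) (hrelu_nonneg _)
        _ = ‖w - w'‖ * ∑ i, relu (t - s i - d i) := by rw [Finset.mul_sum]
        _ ≤ ‖w - w'‖ * (1 / b) := mul_le_mul_of_nonneg_left hsum_relu hnn
        _ = ‖w - w'‖ / b := by ring
    linarith
  -- P(w', t') ≥ P(w', t) + b * (t' - t)
  have hgrow : ∑ i, w' i * relu (t - s i - d i) + b * (t' - t)
      ≤ ∑ i, w' i * relu (t' - s i - d i) := by
    have key : b * (t' - t) ≤
        ∑ i, (w' i * relu (t' - s i - d i) - w' i * relu (t - s i - d i)) := by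
      have hterm : ∀ i ∈ Finset.univ,
          (0:ℝ) ≤ w' i * relu (t' - s i - d i) - w' i * relu (t - s i - d i) := by
        intro i _
        have := hrelu_mono (t - s i - d i) (t' - s i - d i) (by linarith)
        have hwpos : 0 ≤ w' i := le_trans hb.le (hw' i)
        nlinarith
      have hj' : b * (t' - t) ≤
          w' j * relu (t' - s j - d j) - w' j * relu (t - s j - d j) := by
        have h1 : relu (t - s j - d j) = t - s j - d j :=
          max_eq_left hj.le
        have h2 : relu (t' - s j - d j) = t' - s j - d j :=
          max_eq_left (by linarith)
        rw [h1, h2]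
        have : w' j * (t' - s j - d j) - w' j * (t - s j - d j)
            = w' j * (t' - t) := by ring
        rw [this]
        exact mul_le_mul_of_nonneg_right (hw' j) (by linarith)
      exact hj'.trans (Finset.single_le_sum hterm (Finset.mem_univ j))
    rw [Finset.sum_sub_distrib] at key
    linarith
  rw [ht'] at hgrow
  have : b * (t' - t) ≤ ‖w - w'‖ / b := by linarith
  calc t' - t = (b * (t' - t)) / b := by field_simp
    _ ≤ (‖w - w'‖ / b) / b := by
        gcongr
    _ = ‖w - w'‖ / b ^ 2 := by rw [div_div, sq]

/-- Lemma: the spike time of a spiking neuron is `1/b²`-Lipschitz in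
the synaptic weights, w.r.t. the ℓ∞ norm, provided all weights are at least `b`. If
`t` and `t'` are the (unique) solutions of `Σ w_i ρ(t − s_i − d_i) = 1` for weight
tuples `w` and `w'` with all entries `≥ b`, then `|t − t'| ≤ ‖w − w'‖_∞ / b²`. -/
theorem statement16 (N : ℕ) (b : ℝ) (hb : 0 < b)
    (s d : Fin N → ℝ) (hd : ∀ i, 0 ≤ d i)
    (w w' : Fin N → ℝ) (hw : ∀ i, b ≤ w i) (hw' : ∀ i, b ≤ w' i)
    (t t' : ℝ)
    (ht : ∑ i, w i * relu (t - s i - d i) = 1)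
    (ht' : ∑ i, w' i * relu (t' - s i - d i) = 1) :
    |t - t'| ≤ ‖w - w'‖ / b ^ 2 := by
  rw [abs_sub_le_iff]
  constructor
  · have := statement16_aux N b hb s d w' w hw' hw t' t ht' ht
    rwa [norm_sub_rev] at this
  · exact statement16_aux N b hb s d w w' hw hw' t t' ht ht'
end

section
/- Let Φ = (G,W,D) be a positive SNN, and let b, B ∈ (0,∞) be such that w_{(u,v)} ≥ b and d_{(u,v)} ≤ B for all edges (u,v) ∈ E. Let L be the graph depth of G. Then the output of Φ on the all-zero input spike times satisfies ‖R(Φ)(0⃗)‖_{ℓ∞} ≤ L · (1/b + B). -/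
open scoped BigOperators

lemma potential_continuous {V : Type} [Fintype V] [DecidableEq V] (G : NetworkGraph V)
    (w d : V × V → ℝ) (t : V → ℝ) (v : V) :
    Continuous (potential G w d t v) := by
  unfold potential relu
  apply continuous_finset_sum
  intro u _
  exact continuous_const.mul (((continuous_id.sub continuous_const).sub
    continuous_const).max continuous_const)

lemma spike_bound {V : Type} [Fintype V] [DecidableEq V] (G : NetworkGraph V)
    (w d : V × V → ℝ) (b B : ℝ) (hb : 0 < b) (hB : 0 ≤ B)
    (hw : ∀ e ∈ G.E, b ≤ w e)
    (hdnn : ∀ e ∈ G.E, 0 ≤ d e) (hdB : ∀ e ∈ G.E, d e ≤ B)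
    (t : V → ℝ)
    (ht0 : ∀ v ∈ G.Vin, t v = 0)
    (htl : ∀ v : V, v ∉ G.Vin → IsLeast {s : ℝ | potential G w d t v s = 1} (t v))
    (v : V) :
    0 ≤ t v ∧ ∃ n : ℕ, ∃ p : Fin (n + 1) → V,
      (∀ i : Fin n, (p i.castSucc, p i.succ) ∈ G.E) ∧ p (Fin.last n) = v ∧
      t v ≤ (n : ℝ) * (1 / b + B) := by
  induction v using WellFounded.induction G.acyclic with
  | _ v IH =>
  by_cases hv : v ∈ G.Vin
  · refine ⟨le_of_eq (ht0 v hv).symm, 0, fun _ => v, ?_, rfl, ?_⟩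
    · intro i; exact absurd i.2 (Nat.not_lt_zero _)
    · rw [ht0 v hv]; simp
  · obtain ⟨hmem, hlb⟩ := htl v hv
    set S : Finset V := Finset.univ.filter (fun u => (u, v) ∈ G.E) with hS
    have hSne : S.Nonempty := by
      simp only [NetworkGraph.Vin, Set.mem_setOf_eq, not_forall, not_not] at hv
      obtain ⟨u, hu⟩ := hv
      exact ⟨u, by simp [hS, hu]⟩
    have hedge : ∀ u ∈ S, (u, v) ∈ G.E := fun u hu => by simpa [hS] using hu
    have htu_nonneg : ∀ u ∈ S, 0 ≤ t u := fun u hu => (IH u (hedge u hu)).1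
    have hsum_nonneg : ∀ u ∈ S, 0 ≤ t u + d (u, v) := fun u hu =>
      add_nonneg (htu_nonneg u hu) (hdnn _ (hedge u hu))
    have htv0 : 0 ≤ t v := by
      by_contra hneg
      push_neg at hneg
      have hz : potential G w d t v (t v) = 0 := by
        unfold potential relu
        apply Finset.sum_eq_zero
        intro u hu
        have harg : t v - t u - d (u, v) ≤ 0 := by
          have := hsum_nonneg u hu; linarith
        rw [max_eq_right harg, mul_zero]
      rw [Set.mem_setOf_eq, hz] at hmem
      norm_num at hmem
    obtain ⟨u1, hu1S, hu1max⟩ := S.exists_max_image t hSne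
    set s0 : ℝ := t u1 + B + 1 / b with hs0
    have h1b : 0 < 1 / b := by positivity
    have hs0nn : 0 ≤ s0 := by
      have := htu_nonneg u1 hu1S; simp only [hs0]; linarith
    have hpot1 : 1 ≤ potential G w d t v s0 := by
      have hterm : (1 : ℝ) ≤ w (u1, v) * relu (s0 - t u1 - d (u1, v)) := by
        have hd := hdB _ (hedge u1 hu1S)
        have harg : 1 / b ≤ s0 - t u1 - d (u1, v) := by simp only [hs0]; linarith
        have hle : 1 / b ≤ relu (s0 - t u1 - d (u1, v)) :=
          le_trans harg (le_max_left _ _)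
        calc (1 : ℝ) = b * (1 / b) := by field_simp
        _ ≤ w (u1, v) * relu (s0 - t u1 - d (u1, v)) :=
            mul_le_mul (hw _ (hedge u1 hu1S)) hle h1b.le
              (le_trans hb.le (hw _ (hedge u1 hu1S)))
      refine le_trans hterm ?_
      unfold potential
      rw [← hS]
      exact Finset.single_le_sum (f := fun u => w (u, v) * relu (s0 - t u - d (u, v)))
        (fun u hu => mul_nonneg (le_trans hb.le (hw _ (hedge u hu))) (le_max_right _ _)) hu1S
    have hpot0 : potential G w d t v 0 = 0 := by
      unfold potential relu
      apply Finset.sum_eq_zero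
      intro u hu
      have harg : 0 - t u - d (u, v) ≤ 0 := by have := hsum_nonneg u hu; linarith
      rw [max_eq_right harg, mul_zero]
    -- IVT
    have hcont := potential_continuous G w d t v
    have hmemIcc : (1 : ℝ) ∈ Set.Icc (potential G w d t v 0) (potential G w d t v s0) :=
      ⟨by rw [hpot0]; norm_num, hpot1⟩
    obtain ⟨s, hsIcc, hseq⟩ := intermediate_value_Icc hs0nn hcont.continuousOn hmemIcc
    have htvle : t v ≤ s0 := le_trans (hlb hseq) hsIcc.2
    -- build the path
    obtain ⟨-, n1, p1, hp1, hlast1, hle1⟩ := IH u1 (hedge u1 hu1S)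
    refine ⟨htv0, n1 + 1, fun i => if h : (i : ℕ) < n1 + 1 then p1 ⟨i, h⟩ else v, ?_, ?_, ?_⟩
    · intro i
      by_cases hi : (i : ℕ) < n1
      · have h1 : ((i.castSucc : Fin (n1 + 2)) : ℕ) < n1 + 1 := by
          simp only [Fin.coe_castSucc]; omega
        have h2 : ((i.succ : Fin (n1 + 2)) : ℕ) < n1 + 1 := by
          simp only [Fin.val_succ]; omega
        simp only [dif_pos h1, dif_pos h2]
        have := hp1 ⟨(i : ℕ), hi⟩
        convert this using 3 <;> simp [Fin.castSucc, Fin.val_succ]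
      · have hieq : (i : ℕ) = n1 := by omega
        have h1 : ((i.castSucc : Fin (n1 + 2)) : ℕ) < n1 + 1 := by
          simp only [Fin.coe_castSucc]; omega
        have h2 : ¬ ((i.succ : Fin (n1 + 2)) : ℕ) < n1 + 1 := by
          simp only [Fin.val_succ]; omega
        simp only [dif_pos h1, dif_neg h2]
        have hcast : (⟨((i.castSucc : Fin (n1 + 2)) : ℕ), h1⟩ : Fin (n1 + 1)) = Fin.last n1 := by
          apply Fin.ext; simp [Fin.castSucc, hieq]
        rw [hcast, hlast1]
        exact hedge u1 hu1S
    · have h2 : ¬ ((Fin.last (n1 + 1) : Fin (n1 + 2)) : ℕ) < n1 + 1 := by simp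
      simp only [dif_neg h2]
    · have : t v ≤ t u1 + B + 1 / b := htvle
      have hc : t u1 ≤ (n1 : ℝ) * (1 / b + B) := hle1
      push_cast
      nlinarith

/-- Lemma: magnitude of the output of a positive SNN on zero
inputs. If all synaptic weights are at least `b` and all delays at most `B`, and the
graph depth is `L`, then `‖R(Φ)(0⃗)‖_∞ ≤ L (1/b + B)`. -/
theorem statement18 {V : Type} [Fintype V] [DecidableEq V]
    (G : NetworkGraph V) {din dout : ℕ}
    (ein : Fin din → V) (eout : Fin dout → V)
    (hein : Function.Injective ein) (heinr : Set.range ein = G.Vin)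
    (heout : Function.Injective eout) (heoutr : Set.range eout = G.Vout)
    (w d : V × V → ℝ) (b B : ℝ) (hb : 0 < b) (hB : 0 < B)
    (hw : ∀ e ∈ G.E, b ≤ w e)
    (hdnn : ∀ e ∈ G.E, 0 ≤ d e) (hdB : ∀ e ∈ G.E, d e ≤ B)
    (L : ℕ) (hL : G.DepthEq L) :
    ‖snnReal G w d ein eout (0 : Fin din → ℝ)‖ ≤ (L : ℝ) * (1 / b + B) := by
  have hC : (0 : ℝ) ≤ (L : ℝ) * (1 / b + B) := by positivity
  rw [pi_norm_le_iff_of_nonneg hC]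
  intro j
  unfold snnReal spikeMap
  split_ifs with h
  · obtain ⟨ht0, htl⟩ := h.choose_spec
    set t := h.choose
    have htin : ∀ v ∈ G.Vin, t v = 0 := by
      intro v hvin
      rw [ht0 v hvin]
      unfold Function.extend
      split_ifs <;> simp
    obtain ⟨hnn, n, p, hp, -, hle⟩ := spike_bound G w d b B hb hB.le hw hdnn hdB t htin htl (eout j)
    have hnL : n ≤ L := hL.2 n ⟨p, hp⟩
    rw [Real.norm_eq_abs, abs_of_nonneg hnn]
    calc t (eout j) ≤ (n : ℝ) * (1 / b + B) := hle
    _ ≤ (L : ℝ) * (1 / b + B) := by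
        apply mul_le_mul_of_nonneg_right (by exact_mod_cast hnL) (by positivity)
  · simpa using hC
end
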